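/- In the one-period binomial market, for every λ ∈ (0,∞): sup over a ∈ ℝ of U_λ(G(a)) is strictly positive if and only if |up + d(1−p)| > γ; and if |up + d(1−p)| ≤ γ then the supremum equals 0 and is attained at a = 0. -/

import Mathlib

open MeasureTheory ENNReal Real Filter Set
open scoped Topology

noncomputable section

variable {Ω : Type*}

/-- Entropic utility `U_l(X) = -(1/l) * log E[exp (-l * X)]`, valued in `EReal`
(so that it takes values in `[-∞, ∞)` when `l > 0`). -/
def entU {mΩ : MeasurableSpace Ω} (P : Measure Ω) (l : ℝ) (X : Ω → ℝ) : EReal :=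
  (- ENNReal.log (∫⁻ ω, ENNReal.ofReal (Real.exp (-l * X ω)) ∂P)) * ((1 / l : ℝ) : EReal)

/-- Gain of the position `a` in the one-period binomial market with proportional
transaction cost `γ`: `G(a) = a * R - γ * |a|`. -/
def binGain (γ : ℝ) (R : Ω → ℝ) (a : ℝ) (ω : Ω) : ℝ :=
  a * R ω - γ * |a|

/-- Auxiliary: if the derivative at `0` of `y ↦ p e^{c₁ y} + q e^{c₂ y}` is negative,
some positive `y` gives a value below `1`. -/
lemma aux_slope (p q c1 c2 : ℝ) (hpq : p + q = 1)
    (hc : p * c1 + q * c2 < 0) :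
    ∃ y : ℝ, 0 < y ∧ p * Real.exp (c1 * y) + q * Real.exp (c2 * y) < 1 := by
  set h : ℝ → ℝ := fun y => p * Real.exp (c1 * y) + q * Real.exp (c2 * y) with hh
  have h0 : h 0 = 1 := by simp [hh, hpq]
  have hD : HasDerivAt h (p * c1 + q * c2) 0 := by
    have h1 : HasDerivAt (fun y : ℝ => c1 * y) c1 0 := by
      simpa using (hasDerivAt_id (0 : ℝ)).const_mul c1
    have h2 : HasDerivAt (fun y : ℝ => c2 * y) c2 0 := by
      simpa using (hasDerivAt_id (0 : ℝ)).const_mul c2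
    have e1 := (h1.exp).const_mul p
    have e2 := (h2.exp).const_mul q
    have := e1.add e2
    simp only [mul_zero, Real.exp_zero, mul_one] at this
    rw [show p * c1 + q * c2 = p * (1 * c1) + q * (1 * c2) by ring]
    exact this
  have hslope := hasDerivAt_iff_tendsto_slope.mp hD
  have hev : ∀ᶠ y in 𝓝[>] (0 : ℝ), slope h 0 y < 0 :=
    (hslope.eventually_lt_const hc).filter_mono
      (nhdsWithin_mono 0 (fun x hx => ne_of_gt hx))
  obtain ⟨y, hylt, hy⟩ := (hev.and eventually_mem_nhdsWithin).exists
  refine ⟨y, hy, ?_⟩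
  have hs : slope h 0 y = (h y - 1) / y := by
    rw [slope_def_field, h0, sub_zero]
  rw [hs] at hylt
  rcases div_neg_iff.mp hylt with ⟨h1, h2⟩ | ⟨h1, h2⟩
  · exact absurd hy (not_lt.mpr h2.le)
  · change h y < 1
    linarith

/-- Auxiliary: lintegral of `exp (g ∘ R)` in the two-point market. -/
lemma lint_eq {mΩ : MeasurableSpace Ω} (P : Measure Ω) [IsProbabilityMeasure P]
    (u d p : ℝ) (hud : d < u) (hp0 : 0 ≤ p) (hp1 : p ≤ 1)
    (R : Ω → ℝ) (hR : Measurable R)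
    (hRu : P {ω | R ω = u} = ENNReal.ofReal p)
    (hRd : P {ω | R ω = d} = ENNReal.ofReal (1 - p))
    (g : ℝ → ℝ) :
    ∫⁻ ω, ENNReal.ofReal (Real.exp (g (R ω))) ∂P
      = ENNReal.ofReal (p * Real.exp (g u) + (1 - p) * Real.exp (g d)) := by
  set A : Set Ω := {ω | R ω = u} with hAdef
  set B : Set Ω := {ω | R ω = d} with hBdef
  have hA : MeasurableSet A := hR (measurableSet_singleton u)
  have hB : MeasurableSet B := hR (measurableSet_singleton d)
  have hdisj : Disjoint A B := by
    rw [Set.disjoint_left]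
    intro ω h1 h2
    exact hud.ne (by rw [← h1, ← h2])
  have hunion : P (A ∪ B) = 1 := by
    rw [measure_union hdisj hB, hRu, hRd, ← ENNReal.ofReal_add hp0 (by linarith)]
    norm_num
  have hcompl : P ((A ∪ B)ᶜ) = 0 := by
    rw [measure_compl (hA.union hB) (measure_ne_top _ _), hunion, measure_univ, tsub_self]
  rw [← lintegral_add_compl (fun ω => ENNReal.ofReal (Real.exp (g (R ω)))) (hA.union hB),
    setLIntegral_measure_zero _ _ hcompl, add_zero, lintegral_union hB hdisj]
  have hIA : ∫⁻ ω in A, ENNReal.ofReal (Real.exp (g (R ω))) ∂P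
      = ENNReal.ofReal (Real.exp (g u)) * P A := by
    rw [setLIntegral_congr_fun hA (fun ω hω => by
      rw [show R ω = u from hω])]
    exact setLIntegral_const _ _
  have hIB : ∫⁻ ω in B, ENNReal.ofReal (Real.exp (g (R ω))) ∂P
      = ENNReal.ofReal (Real.exp (g d)) * P B := by
    rw [setLIntegral_congr_fun hB (fun ω hω => by
      rw [show R ω = d from hω])]
    exact setLIntegral_const _ _
  rw [hIA, hIB, hRu, hRd,
    ← ENNReal.ofReal_mul (Real.exp_nonneg _), ← ENNReal.ofReal_mul (Real.exp_nonneg _),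
    ← ENNReal.ofReal_add (mul_nonneg (Real.exp_nonneg _) hp0) (mul_nonneg (Real.exp_nonneg _) (by linarith))]
  congr 1
  ring

/-- In the one-period binomial market, for every `λ ∈ (0,∞)`:
`sup_a U_λ(G(a)) > 0` iff `|up + d(1-p)| > γ`; and if `|up + d(1-p)| ≤ γ` then the supremum
equals `0` and is attained at `a = 0`. -/
theorem stmt_18
    {mΩ : MeasurableSpace Ω} (P : Measure Ω) [IsProbabilityMeasure P]
    (u d γ p : ℝ) (hud : d < u) (hγ : 0 < γ) (hp0 : 0 < p) (hp1 : p < 1)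
    (R : Ω → ℝ) (hR : Measurable R)
    (hRu : P {ω | R ω = u} = ENNReal.ofReal p)
    (hRd : P {ω | R ω = d} = ENNReal.ofReal (1 - p))
    (l : ℝ) (hl : 0 < l) :
    ((0 < ⨆ a : ℝ, entU P l (binGain γ R a)) ↔ γ < |u * p + d * (1 - p)|) ∧
      (|u * p + d * (1 - p)| ≤ γ →
        (⨆ a : ℝ, entU P l (binGain γ R a)) = 0 ∧ entU P l (binGain γ R 0) = 0) := by
  have hq : 0 < 1 - p := by linarith
  set m : ℝ := u * p + d * (1 - p) with hm
  set F : ℝ → ℝ := fun a =>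
    p * Real.exp (-l * (a * u - γ * |a|)) + (1 - p) * Real.exp (-l * (a * d - γ * |a|))
    with hF
  have hFpos : ∀ a, 0 < F a := fun a => by
    simp only [hF]
    positivity
  -- entU in terms of F
  have hent : ∀ a, entU P l (binGain γ R a) = ((-Real.log (F a) * (1 / l) : ℝ) : EReal) := by
    intro a
    have hint := lint_eq P u d p hud hp0.le hp1.le R hR hRu hRd
      (fun t => -l * (a * t - γ * |a|))
    have hint' : (∫⁻ ω, ENNReal.ofReal (Real.exp (-l * (a * R ω - γ * |a|))) ∂P)
        = ENNReal.ofReal (F a) := by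
      simpa [hF] using hint
    simp only [entU, binGain]
    rw [hint', ENNReal.log_ofReal_of_pos (hFpos a)]
    norm_cast
  have hF0 : F 0 = 1 := by norm_num [hF]
  -- positivity of entU at a ↔ F a < 1
  have hpos_iff : ∀ a, (0 : EReal) < entU P l (binGain γ R a) ↔ F a < 1 := by
    intro a
    rw [hent a, ← EReal.coe_zero, EReal.coe_lt_coe_iff]
    constructor
    · intro h
      by_contra hcon
      push_neg at hcon
      have hlog : 0 ≤ Real.log (F a) := Real.log_nonneg hcon
      have hil : 0 < 1 / l := by positivity
      nlinarith
    · intro h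
      have hlog : Real.log (F a) < 0 := Real.log_neg (hFpos a) h
      have : 0 < -Real.log (F a) := by linarith
      exact mul_pos this (by positivity)
  -- case |m| ≤ γ : F a ≥ 1 for all a
  have hA_case : |m| ≤ γ → ∀ a, 1 ≤ F a := by
    intro hle a
    have hconv := convexOn_exp.2 (Set.mem_univ (-l * (a * u - γ * |a|)))
      (Set.mem_univ (-l * (a * d - γ * |a|))) hp0.le hq.le (by ring)
    simp only [smul_eq_mul] at hconv
    have hE : p * (-l * (a * u - γ * |a|)) + (1 - p) * (-l * (a * d - γ * |a|))
        = -l * (a * m - γ * |a|) := by rw [hm]; ring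
    rw [hE] at hconv
    have habs : a * m ≤ |a| * γ := by
      calc a * m ≤ |a * m| := le_abs_self _
        _ = |a| * |m| := abs_mul a m
        _ ≤ |a| * γ := mul_le_mul_of_nonneg_left hle (abs_nonneg a)
    have h3 : 0 ≤ -l * (a * m - γ * |a|) := by nlinarith
    calc (1 : ℝ) = Real.exp 0 := by simp
      _ ≤ Real.exp (-l * (a * m - γ * |a|)) := Real.exp_le_exp.mpr h3
      _ ≤ F a := hconv
  -- case γ < |m| : some a makes F a < 1
  have hB_case : γ < |m| → ∃ a, F a < 1 := by
    intro hlt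
    rcases lt_abs.mp hlt with h | h
    · -- γ < m : take small positive a
      obtain ⟨y, hy, hlt1⟩ := aux_slope p (1 - p) (-l * (u - γ)) (-l * (d - γ))
        (by ring) (by rw [hm] at h; nlinarith)
      refine ⟨y, ?_⟩
      have habs : |y| = y := abs_of_pos hy
      have e1 : -l * (y * u - γ * |y|) = (-l * (u - γ)) * y := by rw [habs]; ring
      have e2 : -l * (y * d - γ * |y|) = (-l * (d - γ)) * y := by rw [habs]; ring
      simp only [hF]
      rw [e1, e2]
      exact hlt1
    · -- γ < -m : take small negative a
      obtain ⟨z, hz, hlt1⟩ := aux_slope p (1 - p) (l * (u + γ)) (l * (d + γ))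
        (by ring) (by rw [hm] at h; nlinarith)
      refine ⟨-z, ?_⟩
      have habs : |(-z)| = z := by rw [abs_neg, abs_of_pos hz]
      have e1 : -l * ((-z) * u - γ * |(-z)|) = (l * (u + γ)) * z := by rw [habs]; ring
      have e2 : -l * ((-z) * d - γ * |(-z)|) = (l * (d + γ)) * z := by rw [habs]; ring
      simp only [hF]
      rw [e1, e2]
      exact hlt1
  constructor
  · rw [lt_iSup_iff]
    constructor
    · rintro ⟨a, ha⟩
      by_contra hcon
      push_neg at hcon
      exact absurd ((hpos_iff a).mp ha) (not_lt.mpr (hA_case hcon a))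
    · intro hlt
      obtain ⟨a, ha⟩ := hB_case hlt
      exact ⟨a, (hpos_iff a).mpr ha⟩
  · intro hle
    have h0 : entU P l (binGain γ R 0) = 0 := by
      rw [hent 0, hF0]
      simp
    refine ⟨le_antisymm ?_ ?_, h0⟩
    · refine iSup_le fun a => ?_
      rw [hent a]
      have h1 : 1 ≤ F a := hA_case hle a
      have hlog : 0 ≤ Real.log (F a) := Real.log_nonneg h1
      have hnp : -Real.log (F a) * (1 / l) ≤ 0 := by
        have hil : 0 < 1 / l := by positivity
        nlinarith
      exact_mod_cast hnp
    · rw [← h0]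
      exact le_iSup (fun a => entU P l (binGain γ R a)) 0
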